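/- There exists a numeral system which possesses a closed λ-term for Successor and a closed λ-term for Zero Test, but which possesses no closed λ-term for Predecessor. -/

import Mathlib

/-- Untyped λ-terms in de Bruijn notation. -/
inductive Lam : Type
  | var : ℕ → Lam
  | app : Lam → Lam → Lam
  | lam : Lam → Lam
  deriving DecidableEq

namespace Lam

/-- Shift by one the free variables with index ≥ `d`. -/
def lift (d : ℕ) : Lam → Lam
  | var n => if n < d then var n else var (n + 1)
  | app M N => app (lift d M) (lift d N)
  | lam M => lam (lift (d + 1) M)

/-- Capture-avoiding substitution of `N` for the free variable of index `n`. -/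
def subst : Lam → ℕ → Lam → Lam
  | var m, n, N => if m = n then N else if n < m then var (m - 1) else var m
  | app M₁ M₂, n, N => app (subst M₁ n N) (subst M₂ n N)
  | lam M, n, N => lam (subst M (n + 1) (lift 0 N))

/-- One-step β-reduction (contraction of a β-redex anywhere in the term). -/
inductive Step : Lam → Lam → Prop
  | beta (M N : Lam) : Step (app (lam M) N) (subst M 0 N)
  | appL {M M' : Lam} (N : Lam) : Step M M' → Step (app M N) (app M' N)
  | appR (M : Lam) {N N' : Lam} : Step N N' → Step (app M N) (app M N')
  | lam {M M' : Lam} : Step M M' → Step (Lam.lam M) (Lam.lam M')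

/-- β-equivalence: the equivalence relation generated by one-step β-reduction. -/
def BetaEq : Lam → Lam → Prop := Relation.EqvGen Step

/-- The variable of index `n` occurs free in the term. -/
def HasFree : Lam → ℕ → Prop
  | var m, n => m = n
  | app M N, n => HasFree M n ∨ HasFree N n
  | lam M, n => HasFree M (n + 1)

/-- A term is closed if it has no free variables. -/
def Closed (M : Lam) : Prop := ∀ n, ¬ HasFree M n

/-- A term is β-normal: it contains no β-redex. -/
def IsBetaNormal : Lam → Prop
  | app (lam _) _ => False
  | app M N => IsBetaNormal M ∧ IsBetaNormal N
  | lam M => IsBetaNormal M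
  | var _ => True

/-- A term is βη-normal: it contains no β-redex and no η-redex
`λx.(M x)` with `x` not free in `M`. -/
def IsBetaEtaNormal : Lam → Prop
  | app (lam _) _ => False
  | app M N => IsBetaEtaNormal M ∧ IsBetaEtaNormal N
  | lam (app M (var 0)) => HasFree M 0 ∧ IsBetaEtaNormal (app M (var 0))
  | lam M => IsBetaEtaNormal M
  | var _ => True

/-- `I = λx.x`. -/
def I : Lam := lam (var 0)

/-- `T = λxλy.x`. -/
def T : Lam := lam (lam (var 1))

/-- `F = λxλy.y`. -/
def F : Lam := lam (lam (var 0))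

/-- The pair `<M,N> = λx.(x M N)` (the binder shifts the free variables of `M,N`). -/
def pair (M N : Lam) : Lam := lam (app (app (var 0) (lift 0 M)) (lift 0 N))

/-! ### Basic lift/subst lemmas -/

@[simp] theorem lift_app (d : ℕ) (M N : Lam) :
    lift d (app M N) = app (lift d M) (lift d N) := rfl
@[simp] theorem lift_lam (d : ℕ) (M : Lam) :
    lift d (lam M) = lam (lift (d + 1) M) := rfl
theorem lift_var (d n : ℕ) :
    lift d (var n) = if n < d then var n else var (n + 1) := rfl
@[simp] theorem subst_app (M₁ M₂ : Lam) (n : ℕ) (N : Lam) :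
    subst (app M₁ M₂) n N = app (subst M₁ n N) (subst M₂ n N) := rfl
@[simp] theorem subst_lam (M : Lam) (n : ℕ) (N : Lam) :
    subst (lam M) n N = lam (subst M (n + 1) (lift 0 N)) := rfl
theorem subst_var (m n : ℕ) (N : Lam) :
    subst (var m) n N = if m = n then N else if n < m then var (m - 1) else var m := rfl

theorem lift_var_lt {d n : ℕ} (h : n < d) : lift d (var n) = var n := by
  rw [lift_var, if_pos h]
theorem lift_var_ge {d n : ℕ} (h : ¬ n < d) : lift d (var n) = var (n + 1) := by
  rw [lift_var, if_neg h]
theorem subst_var_eq {n : ℕ} (N : Lam) : subst (var n) n N = N := by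
  rw [subst_var, if_pos rfl]
theorem subst_var_gt {m n : ℕ} (h : n < m) (N : Lam) : subst (var m) n N = var (m - 1) := by
  rw [subst_var, if_neg (by omega), if_pos h]
theorem subst_var_lt {m n : ℕ} (h : m < n) (N : Lam) : subst (var m) n N = var m := by
  rw [subst_var, if_neg (by omega), if_neg (by omega)]

theorem liftLift (M : Lam) : ∀ {d e : ℕ}, e ≤ d →
    lift e (lift d M) = lift (d + 1) (lift e M) := by
  induction M with
  | var n =>
    intro d e h
    rcases Nat.lt_or_ge n e with h1 | h1
    · conv => lhs; rw [lift_var_lt (show n < d by omega), lift_var_lt h1]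
      conv => rhs; rw [lift_var_lt h1, lift_var_lt (show n < d + 1 by omega)]
    · rcases Nat.lt_or_ge n d with h2 | h2
      · conv => lhs; rw [lift_var_lt h2, lift_var_ge (by omega)]
        conv => rhs; rw [lift_var_ge (by omega), lift_var_lt (show n + 1 < d + 1 by omega)]
      · conv => lhs; rw [lift_var_ge (by omega), lift_var_ge (by omega)]
        conv => rhs; rw [lift_var_ge (by omega), lift_var_ge (show ¬ n + 1 < d + 1 by omega)]
  | app M N ihM ihN => intro d e h; simp [ihM h, ihN h]
  | lam M ih =>
    intro d e h
    simp only [lift_lam, lam.injEq]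
    exact ih (by omega)

theorem substLift (M : Lam) : ∀ {n : ℕ} (N : Lam), subst (lift n M) n N = M := by
  induction M with
  | var m =>
    intro n N
    rcases Nat.lt_or_ge m n with h1 | h1
    · rw [lift_var_lt h1, subst_var_lt h1]
    · rw [lift_var_ge (by omega), subst_var_gt (by omega)]
      simp
  | app M₁ M₂ ih₁ ih₂ => intro n N; simp [ih₁, ih₂]
  | lam M ih => intro n N; simp [ih]

theorem liftSubst_le (M : Lam) : ∀ {d n : ℕ}, d ≤ n → ∀ (N : Lam),
    lift d (subst M n N) = subst (lift d M) (n + 1) (lift d N) := by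
  induction M with
  | var m =>
    intro d n h N
    rcases Nat.lt_trichotomy m n with h1 | h1 | h1
    · rcases Nat.lt_or_ge m d with h2 | h2
      · conv => lhs; rw [subst_var_lt h1, lift_var_lt h2]
        conv => rhs; rw [lift_var_lt h2, subst_var_lt (show m < n + 1 by omega)]
      · conv => lhs; rw [subst_var_lt h1, lift_var_ge (by omega)]
        conv => rhs; rw [lift_var_ge (by omega), subst_var_lt (show m + 1 < n + 1 by omega)]
    · subst h1
      conv => lhs; rw [subst_var_eq]
      conv => rhs; rw [lift_var_ge (show ¬ m < d by omega), subst_var_eq]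
    · conv => lhs; rw [subst_var_gt h1, lift_var_ge (show ¬ m - 1 < d by omega)]
      conv => rhs; rw [lift_var_ge (show ¬ m < d by omega),
        subst_var_gt (show n + 1 < m + 1 by omega)]
      congr 1; omega
  | app M₁ M₂ ih₁ ih₂ => intro d n h N; simp [ih₁ h, ih₂ h]
  | lam M ih =>
    intro d n h N
    simp only [subst_lam, lift_lam, lam.injEq]
    rw [ih (by omega), liftLift N (Nat.zero_le d)]

theorem liftSubst_ge (M : Lam) : ∀ {d n : ℕ}, n ≤ d → ∀ (N : Lam),
    lift d (subst M n N) = subst (lift (d + 1) M) n (lift d N) := by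
  induction M with
  | var m =>
    intro d n h N
    rcases Nat.lt_trichotomy m n with h1 | h1 | h1
    · conv => lhs; rw [subst_var_lt h1, lift_var_lt (show m < d by omega)]
      conv => rhs; rw [lift_var_lt (show m < d + 1 by omega), subst_var_lt h1]
    · subst h1
      conv => lhs; rw [subst_var_eq]
      conv => rhs; rw [lift_var_lt (show m < d + 1 by omega), subst_var_eq]
    · rcases Nat.lt_or_ge m (d + 1) with h2 | h2
      · conv => lhs; rw [subst_var_gt h1, lift_var_lt (show m - 1 < d by omega)]
        conv => rhs; rw [lift_var_lt h2, subst_var_gt h1]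
      · conv => lhs; rw [subst_var_gt h1, lift_var_ge (show ¬ m - 1 < d by omega)]
        conv => rhs; rw [lift_var_ge (by omega), subst_var_gt (show n < m + 1 by omega)]
        congr 1; omega
  | app M₁ M₂ ih₁ ih₂ => intro d n h N; simp [ih₁ h, ih₂ h]
  | lam M ih =>
    intro d n h N
    simp only [subst_lam, lift_lam, lam.injEq]
    rw [ih (by omega), liftLift N (Nat.zero_le d)]

theorem substSubst (M : Lam) : ∀ {m n : ℕ}, m ≤ n → ∀ (N K : Lam),
    subst (subst M m N) n K = subst (subst M (n + 1) (lift m K)) m (subst N n K) := by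
  induction M with
  | var v =>
    intro m n h N K
    by_cases h1 : v = m
    · subst h1
      conv => lhs; rw [subst_var_eq]
      conv => rhs; rw [subst_var_lt (show v < n + 1 by omega), subst_var_eq]
    · by_cases h2 : v = n + 1
      · subst h2
        have e1 : subst (var (n + 1)) m N = var n := by
          rw [subst_var_gt (show m < n + 1 by omega)]; simp
        conv => lhs; rw [e1, subst_var_eq]
        conv => rhs; rw [subst_var_eq, substLift]
      · rcases Nat.lt_or_ge v m with h3 | h3
        · conv => lhs; rw [subst_var_lt h3, subst_var_lt (show v < n by omega)]
          conv => rhs; rw [subst_var_lt (show v < n + 1 by omega), subst_var_lt h3]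
        · rcases Nat.lt_or_ge v (n + 1) with h4 | h4
          · conv => lhs; rw [subst_var_gt (show m < v by omega),
              subst_var_lt (show v - 1 < n by omega)]
            conv => rhs; rw [subst_var_lt (show v < n + 1 by omega),
              subst_var_gt (show m < v by omega)]
          · conv => lhs; rw [subst_var_gt (show m < v by omega),
              subst_var_gt (show n < v - 1 by omega)]
            conv => rhs; rw [subst_var_gt (show n + 1 < v by omega),
              subst_var_gt (show m < v - 1 by omega)]
  | app M₁ M₂ ih₁ ih₂ => intro m n h N K; simp [ih₁ h, ih₂ h]
  | lam M ih =>
    intro m n h N K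
    simp only [subst_lam, lam.injEq]
    rw [ih (by omega), ← liftLift K (Nat.zero_le m), ← liftSubst_le N (Nat.zero_le n)]


/-! ### Free variables -/

@[simp] theorem hasFree_var {m n : ℕ} : HasFree (var m) n ↔ m = n := Iff.rfl
@[simp] theorem hasFree_app {M N : Lam} {n : ℕ} :
    HasFree (app M N) n ↔ HasFree M n ∨ HasFree N n := Iff.rfl
@[simp] theorem hasFree_lam {M : Lam} {n : ℕ} :
    HasFree (lam M) n ↔ HasFree M (n + 1) := Iff.rfl

theorem lift_of_free_lt (M : Lam) : ∀ {d : ℕ}, (∀ i, HasFree M i → i < d) → lift d M = M := by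
  induction M with
  | var m => intro d h; exact lift_var_lt (h m rfl)
  | app M₁ M₂ ih₁ ih₂ =>
    intro d h
    simp only [lift_app]
    rw [ih₁ (fun i hi => h i (Or.inl hi)), ih₂ (fun i hi => h i (Or.inr hi))]
  | lam M ih =>
    intro d h
    simp only [lift_lam, lam.injEq]
    exact ih (fun i hi => by
      cases i with
      | zero => omega
      | succ j => have := h j hi; omega)

theorem subst_of_free_lt (M : Lam) : ∀ {n : ℕ} (N : Lam),
    (∀ i, HasFree M i → i < n) → subst M n N = M := by
  induction M with
  | var m => intro n N h; exact subst_var_lt (h m rfl) N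
  | app M₁ M₂ ih₁ ih₂ =>
    intro n N h
    simp only [subst_app]
    rw [ih₁ _ (fun i hi => h i (Or.inl hi)), ih₂ _ (fun i hi => h i (Or.inr hi))]
  | lam M ih =>
    intro n N h
    simp only [subst_lam, lam.injEq]
    exact ih _ (fun i hi => by
      cases i with
      | zero => omega
      | succ j => have := h j hi; omega)

theorem Closed.lift_eq {M : Lam} (h : Closed M) (d : ℕ) : lift d M = M :=
  lift_of_free_lt M (fun i hi => absurd hi (h i))

theorem Closed.subst_eq {M : Lam} (h : Closed M) (n : ℕ) (N : Lam) : subst M n N = M :=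
  subst_of_free_lt M N (fun i hi => absurd hi (h i))

theorem hasFree_lift_inv {M : Lam} : ∀ {d i : ℕ}, HasFree (lift d M) i →
    (i < d ∧ HasFree M i) ∨ (d < i ∧ HasFree M (i - 1)) := by
  induction M with
  | var m =>
    intro d i h
    by_cases h1 : m < d
    · rw [lift_var_lt h1] at h
      simp only [hasFree_var] at h; subst h; exact Or.inl ⟨h1, rfl⟩
    · rw [lift_var_ge h1] at h
      simp only [hasFree_var] at h; subst h
      exact Or.inr ⟨by omega, by simp⟩
  | app M₁ M₂ ih₁ ih₂ =>
    intro d i h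
    rcases h with h | h
    · rcases ih₁ h with ⟨h1, h2⟩ | ⟨h1, h2⟩
      · exact Or.inl ⟨h1, Or.inl h2⟩
      · exact Or.inr ⟨h1, Or.inl h2⟩
    · rcases ih₂ h with ⟨h1, h2⟩ | ⟨h1, h2⟩
      · exact Or.inl ⟨h1, Or.inr h2⟩
      · exact Or.inr ⟨h1, Or.inr h2⟩
  | lam M ih =>
    intro d i h
    simp only [lift_lam, hasFree_lam] at h
    rcases ih h with ⟨h1, h2⟩ | ⟨h1, h2⟩
    · exact Or.inl ⟨by omega, h2⟩
    · refine Or.inr ⟨by omega, ?_⟩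
      simp only [hasFree_lam]
      have : i + 1 - 1 = (i - 1) + 1 := by omega
      rwa [this] at h2

theorem hasFree_subst_inv {M : Lam} : ∀ {n i : ℕ} {N : Lam}, HasFree (subst M n N) i →
    (HasFree M (if i < n then i else i + 1)) ∨ HasFree N i := by
  induction M with
  | var m =>
    intro n i N h
    by_cases h1 : m = n
    · subst h1; rw [subst_var_eq] at h; exact Or.inr h
    · rcases Nat.lt_or_ge m n with h2 | h2
      · rw [subst_var_lt h2] at h
        simp only [hasFree_var] at h; subst h
        rw [if_pos h2]; exact Or.inl rfl
      · rw [subst_var_gt (by omega)] at h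
        simp only [hasFree_var] at h
        left
        have h3 : ¬ i < n := by omega
        rw [if_neg h3]
        simp only [hasFree_var]
        omega
  | app M₁ M₂ ih₁ ih₂ =>
    intro n i N h
    rcases h with h | h
    · rcases ih₁ h with h' | h'
      · exact Or.inl (Or.inl h')
      · exact Or.inr h'
    · rcases ih₂ h with h' | h'
      · exact Or.inl (Or.inr h')
      · exact Or.inr h'
  | lam M ih =>
    intro n i N h
    simp only [subst_lam, hasFree_lam] at h
    rcases ih h with h' | h'
    · left
      simp only [hasFree_lam]
      by_cases h2 : i < n
      · rw [if_pos h2]; rwa [if_pos (show i + 1 < n + 1 by omega)] at h'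
      · rw [if_neg h2]; rwa [if_neg (show ¬ i + 1 < n + 1 by omega)] at h'
    · rcases hasFree_lift_inv h' with ⟨h1, _⟩ | ⟨h1, h2⟩
      · omega
      · right
        simpa using h2


/-! ### Multi-step reduction -/

/-- Reflexive-transitive closure of one-step β-reduction. -/
def Steps : Lam → Lam → Prop := Relation.ReflTransGen Step

theorem Steps.refl (M : Lam) : Steps M M := Relation.ReflTransGen.refl

theorem Steps.single {M N : Lam} (h : Step M N) : Steps M N :=
  Relation.ReflTransGen.single h

theorem Steps.trans {M N K : Lam} (h1 : Steps M N) (h2 : Steps N K) : Steps M K :=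
  Relation.ReflTransGen.trans h1 h2

theorem Steps.tail {M N K : Lam} (h1 : Steps M N) (h2 : Step N K) : Steps M K :=
  Relation.ReflTransGen.tail h1 h2

theorem Steps.head {M N K : Lam} (h1 : Step M N) (h2 : Steps N K) : Steps M K :=
  Relation.ReflTransGen.head h1 h2

theorem Steps.appL {M M' : Lam} (N : Lam) (h : Steps M M') : Steps (app M N) (app M' N) := by
  induction h with
  | refl => exact Steps.refl _
  | tail _ h2 ih => exact ih.tail (Step.appL N h2)

theorem Steps.appR (M : Lam) {N N' : Lam} (h : Steps N N') : Steps (app M N) (app M N') := by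
  induction h with
  | refl => exact Steps.refl _
  | tail _ h2 ih => exact ih.tail (Step.appR M h2)

theorem Steps.app₂ {M M' N N' : Lam} (h1 : Steps M M') (h2 : Steps N N') :
    Steps (app M N) (app M' N') :=
  (Steps.appL N h1).trans (Steps.appR M' h2)

theorem Steps.lam {M M' : Lam} (h : Steps M M') : Steps (lam M) (lam M') := by
  induction h with
  | refl => exact Steps.refl _
  | tail _ h2 ih => exact ih.tail (Step.lam h2)

/-! ### Compatibility of reduction with lift and subst -/

theorem Step.lift_compat {M N : Lam} (h : Step M N) : ∀ (d : ℕ), Step (lift d M) (lift d N) := by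
  induction h with
  | beta B A =>
    intro d
    have : lift d (subst B 0 A) = subst (lift (d + 1) B) 0 (lift d A) :=
      liftSubst_ge B (Nat.zero_le d) A
    rw [this]
    exact Step.beta _ _
  | appL N _ ih => intro d; exact Step.appL _ (ih d)
  | appR M _ ih => intro d; exact Step.appR _ (ih d)
  | lam _ ih => intro d; exact Step.lam (ih (_ + 1))

theorem Steps.lift_compat {M N : Lam} (h : Steps M N) (d : ℕ) :
    Steps (lift d M) (lift d N) := by
  induction h with
  | refl => exact Steps.refl _
  | tail _ h2 ih => exact ih.tail (h2.lift_compat d)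

theorem Step.subst_left {M M' : Lam} (h : Step M M') :
    ∀ (n : ℕ) (N : Lam), Step (subst M n N) (subst M' n N) := by
  induction h with
  | beta B A =>
    intro n N
    have : subst (subst B 0 A) n N
        = subst (subst B (n + 1) (lift 0 N)) 0 (subst A n N) :=
      substSubst B (Nat.zero_le n) A N
    rw [this]
    exact Step.beta _ _
  | appL K _ ih => intro n N; exact Step.appL _ (ih n N)
  | appR K _ ih => intro n N; exact Step.appR _ (ih n N)
  | lam _ ih => intro n N; exact Step.lam (ih (_ + 1) (lift 0 N))

theorem Steps.subst_left {M M' : Lam} (h : Steps M M') (n : ℕ) (N : Lam) :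
    Steps (subst M n N) (subst M' n N) := by
  induction h with
  | refl => exact Steps.refl _
  | tail _ h2 ih => exact ih.tail (h2.subst_left n N)

theorem Steps.subst_right (M : Lam) {N N' : Lam} (h : Step N N') (n : ℕ) :
    Steps (subst M n N) (subst M n N') := by
  induction M generalizing n N N' with
  | var m =>
    by_cases h1 : m = n
    · subst h1; rw [subst_var_eq, subst_var_eq]; exact Steps.single h
    · rcases Nat.lt_or_ge m n with h2 | h2
      · rw [subst_var_lt h2, subst_var_lt h2]; exact Steps.refl _
      · rw [subst_var_gt (by omega), subst_var_gt (by omega)]; exact Steps.refl _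
  | app M₁ M₂ ih₁ ih₂ =>
    simp only [subst_app]
    exact Steps.app₂ (ih₁ h n) (ih₂ h n)
  | lam M ih =>
    simp only [subst_lam]
    exact Steps.lam (ih (h.lift_compat 0) (n + 1))

/-! ### Reduction and free variables -/

theorem Step.hasFree_rev {M N : Lam} (h : Step M N) :
    ∀ {i : ℕ}, HasFree N i → HasFree M i := by
  induction h with
  | beta B A =>
    intro i hi
    rcases hasFree_subst_inv hi with h' | h'
    · by_cases h2 : i < 0
      · omega
      · rw [if_neg h2] at h'
        exact Or.inl h'
    · exact Or.inr h'
  | appL N _ ih =>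
    intro i hi
    rcases hi with h' | h'
    · exact Or.inl (ih h')
    · exact Or.inr h'
  | appR M _ ih =>
    intro i hi
    rcases hi with h' | h'
    · exact Or.inl h'
    · exact Or.inr (ih h')
  | lam _ ih => intro i hi; exact ih hi

theorem Steps.hasFree_rev {M N : Lam} (h : Steps M N) {i : ℕ}
    (hi : HasFree N i) : HasFree M i := by
  induction h with
  | refl => exact hi
  | tail _ h2 ih => exact ih (h2.hasFree_rev hi)

theorem Steps.closed {M N : Lam} (h : Steps M N) (hM : Closed M) : Closed N :=
  fun i hi => hM i (h.hasFree_rev hi)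

/-! ### β-equivalence helpers -/

theorem BetaEq.refl (M : Lam) : BetaEq M M := Relation.EqvGen.refl M
theorem BetaEq.symm {M N : Lam} (h : BetaEq M N) : BetaEq N M := Relation.EqvGen.symm _ _ h
theorem BetaEq.trans {M N K : Lam} (h1 : BetaEq M N) (h2 : BetaEq N K) : BetaEq M K :=
  Relation.EqvGen.trans _ _ _ h1 h2

theorem Step.betaEq {M N : Lam} (h : Step M N) : BetaEq M N := Relation.EqvGen.rel _ _ h

theorem Steps.betaEq {M N : Lam} (h : Steps M N) : BetaEq M N := by
  induction h with
  | refl => exact BetaEq.refl _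
  | tail _ h2 ih => exact ih.trans h2.betaEq

theorem BetaEq.appL {M M' : Lam} (N : Lam) (h : BetaEq M M') :
    BetaEq (app M N) (app M' N) := by
  induction h with
  | rel x y hxy => exact (Step.appL N hxy).betaEq
  | refl x => exact BetaEq.refl _
  | symm x y _ ih => exact ih.symm
  | trans x y z _ _ ih1 ih2 => exact ih1.trans ih2

theorem BetaEq.appR (M : Lam) {N N' : Lam} (h : BetaEq N N') :
    BetaEq (app M N) (app M N') := by
  induction h with
  | rel x y hxy => exact (Step.appR M hxy).betaEq
  | refl x => exact BetaEq.refl _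
  | symm x y _ ih => exact ih.symm
  | trans x y z _ _ ih1 ih2 => exact ih1.trans ih2


/-! ### Parallel reduction and confluence -/

/-- Parallel (simultaneous) β-reduction. -/
inductive Par : Lam → Lam → Prop
  | var (n : ℕ) : Par (var n) (var n)
  | lam {M M' : Lam} : Par M M' → Par (lam M) (lam M')
  | app {M M' N N' : Lam} : Par M M' → Par N N' → Par (app M N) (app M' N')
  | beta {B B' A A' : Lam} : Par B B' → Par A A' →
      Par (app (lam B) A) (subst B' 0 A')

theorem Par.refl (M : Lam) : Par M M := by
  induction M with
  | var n => exact Par.var n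
  | app M N ihM ihN => exact Par.app ihM ihN
  | lam M ih => exact Par.lam ih

theorem Step.par {M N : Lam} (h : Step M N) : Par M N := by
  induction h with
  | beta B A => exact Par.beta (Par.refl B) (Par.refl A)
  | appL N _ ih => exact Par.app ih (Par.refl N)
  | appR M _ ih => exact Par.app (Par.refl M) ih
  | lam _ ih => exact Par.lam ih

theorem parSteps {M N : Lam} (h : Par M N) : Steps M N := by
  induction h with
  | var n => exact Steps.refl _
  | lam _ ih => exact Steps.lam ih
  | app _ _ ih1 ih2 => exact Steps.app₂ ih1 ih2
  | beta _ _ ih1 ih2 =>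
    exact (Steps.app₂ (Steps.lam ih1) ih2).tail (Step.beta _ _)

theorem parLift {M N : Lam} (h : Par M N) : ∀ (d : ℕ), Par (lift d M) (lift d N) := by
  induction h with
  | var n => intro d; exact Par.refl _
  | lam _ ih => intro d; exact Par.lam (ih (d + 1))
  | app _ _ ih1 ih2 => intro d; exact Par.app (ih1 d) (ih2 d)
  | @beta B B' A A' _ _ ih1 ih2 =>
    intro d
    have e : lift d (subst B' 0 A') = subst (lift (d + 1) B') 0 (lift d A') :=
      liftSubst_ge B' (Nat.zero_le d) A'
    simp only [lift_app, lift_lam, e]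
    exact Par.beta (ih1 (d + 1)) (ih2 d)

theorem parSubst {M M' : Lam} (h : Par M M') :
    ∀ {n : ℕ} {N N' : Lam}, Par N N' → Par (subst M n N) (subst M' n N') := by
  induction h with
  | var m =>
    intro n N N' hN
    by_cases h1 : m = n
    · subst h1; rw [subst_var_eq, subst_var_eq]; exact hN
    · rcases Nat.lt_or_ge m n with h2 | h2
      · rw [subst_var_lt h2, subst_var_lt h2]; exact Par.refl _
      · rw [subst_var_gt (by omega), subst_var_gt (by omega)]; exact Par.refl _
  | lam _ ih =>
    intro n N N' hN
    exact Par.lam (ih (parLift hN 0))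
  | app _ _ ih1 ih2 =>
    intro n N N' hN
    exact Par.app (ih1 hN) (ih2 hN)
  | @beta B B' A A' _ _ ih1 ih2 =>
    intro n N N' hN
    have e : subst (subst B' 0 A') n N'
        = subst (subst B' (n + 1) (lift 0 N')) 0 (subst A' n N') :=
      substSubst B' (Nat.zero_le n) A' N'
    simp only [subst_app, subst_lam, e]
    exact Par.beta (ih1 (parLift hN 0)) (ih2 hN)

/-- Takahashi's complete development. -/
def cd : Lam → Lam
  | var n => var n
  | lam M => lam (cd M)
  | app (lam B) A => subst (cd B) 0 (cd A)
  | app (var m) N => app (var m) (cd N)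
  | app (app M1 M2) N => app (cd (app M1 M2)) (cd N)

theorem cd_lam (M : Lam) : cd (lam M) = lam (cd M) := rfl
theorem cd_app_var (m : ℕ) (N : Lam) : cd (app (var m) N) = app (var m) (cd N) := rfl
theorem cd_app_app (M1 M2 N : Lam) :
    cd (app (app M1 M2) N) = app (cd (app M1 M2)) (cd N) := rfl
theorem cd_beta (B A : Lam) : cd (app (lam B) A) = subst (cd B) 0 (cd A) := rfl

theorem par_lam_inv {M X : Lam} (h : Par (lam M) X) : ∃ M', X = lam M' ∧ Par M M' := by
  cases h with
  | lam h' => exact ⟨_, rfl, h'⟩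

theorem parCdTriangle {M N : Lam} (h : Par M N) : Par N (cd M) := by
  induction h with
  | var n => exact Par.var n
  | lam _ ih => exact Par.lam ih
  | @app M M' N N' hM hN ihM ihN =>
    cases M with
    | var m => exact Par.app ihM ihN
    | app M1 M2 => exact Par.app ihM ihN
    | lam B =>
      rcases par_lam_inv hM with ⟨B', rfl, hB⟩
      rw [cd_lam] at ihM
      have ihB : Par B' (cd B) := by
        cases ihM with
        | lam h' => exact h'
      rw [cd_beta]
      exact Par.beta ihB ihN
  | @beta B B' A A' hB hA ihB ihA =>
    rw [cd_beta]
    exact parSubst ihB ihA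

theorem parDiamond {M N1 N2 : Lam} (h1 : Par M N1) (h2 : Par M N2) :
    ∃ K, Par N1 K ∧ Par N2 K :=
  ⟨cd M, parCdTriangle h1, parCdTriangle h2⟩

/-- Church–Rosser / confluence. -/
theorem betaEq_join {M N : Lam} (h : BetaEq M N) : ∃ K, Steps M K ∧ Steps N K := by
  have hsub' : ∀ {a b : Lam}, Relation.ReflTransGen Par a b → Steps a b := by
    intro a b hab
    induction hab with
    | refl => exact Steps.refl _
    | tail _ h2 ih => exact ih.trans (parSteps h2)
  have hcr : ∀ a b c : Lam, Par a b → Par a c →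
      ∃ d, Relation.ReflGen Par b d ∧ Relation.ReflTransGen Par c d := by
    intro a b c hab hac
    rcases parDiamond hab hac with ⟨k, hk1, hk2⟩
    exact ⟨k, Relation.ReflGen.single hk1, Relation.ReflTransGen.single hk2⟩
  have hequiv := Relation.equivalence_join_reflTransGen hcr
  have hjoin : Relation.Join (Relation.ReflTransGen Par) M N := by
    induction h with
    | rel x y hxy => exact ⟨y, Relation.ReflTransGen.single hxy.par, Relation.ReflTransGen.refl⟩
    | refl x => exact hequiv.refl x
    | symm x y _ ih => exact hequiv.symm ih
    | trans x y z _ _ ih1 ih2 => exact hequiv.trans ih1 ih2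
  rcases hjoin with ⟨K, h1, h2⟩
  exact ⟨K, hsub' h1, hsub' h2⟩

/-- If `N` has no one-step reduct, then anything β-equal to `N` reduces to `N`. -/
theorem BetaEq.steps_of_nf {M N : Lam} (hnf : ∀ X, ¬ Step N X) (h : BetaEq M N) :
    Steps M N := by
  rcases betaEq_join h with ⟨K, h1, h2⟩
  have : N = K := by
    cases (Relation.reflTransGen_iff_eq (fun X hX => hnf X hX)).mp h2
    rfl
  rwa [← this] at h1


/-! ### Iterated lambdas, application chains and head skeletons -/

/-- `lams k X` is `λ…λ.X` with `k` lambdas. -/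
def lams : ℕ → Lam → Lam
  | 0, X => X
  | k + 1, X => lam (lams k X)

/-- `appChain H [A₁,…,Aⱼ] = H A₁ … Aⱼ`. -/
def appChain : Lam → List Lam → Lam
  | H, [] => H
  | H, A :: rest => appChain (app H A) rest

theorem appChain_append (H : Lam) (as : List Lam) (b : Lam) :
    appChain H (as ++ [b]) = app (appChain H as) b := by
  induction as generalizing H with
  | nil => rfl
  | cons a rest ih => exact ih (app H a)

theorem lams_add (a b : ℕ) (X : Lam) : lams (a + b) X = lams b (lams a X) := by
  induction b with
  | zero => rfl
  | succ b ih => rw [show a + (b+1) = (a+b) + 1 from rfl]; simp only [lams]; rw [ih]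

/-- Iterated `lift 0`. -/
def liftIter : ℕ → Lam → Lam
  | 0, N => N
  | k + 1, N => lift 0 (liftIter k N)

theorem liftIter_lift0 (k : ℕ) (N : Lam) :
    liftIter k (lift 0 N) = lift 0 (liftIter k N) := by
  induction k with
  | zero => rfl
  | succ k ih => simp only [liftIter, ih]

theorem liftIter_closed {N : Lam} (h : Closed N) (k : ℕ) : liftIter k N = N := by
  induction k with
  | zero => rfl
  | succ k ih => simp only [liftIter, ih, h.lift_eq]

theorem subst_lams (k : ℕ) (X : Lam) (n : ℕ) (N : Lam) :
    subst (lams k X) n N = lams k (subst X (n + k) (liftIter k N)) := by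
  induction k generalizing n N with
  | zero => rfl
  | succ k ih =>
    simp only [lams, subst_lam, lam.injEq]
    rw [ih (n+1) (lift 0 N), liftIter_lift0]
    congr 2
    omega

theorem subst_appChain (H : Lam) (args : List Lam) (n : ℕ) (N : Lam) :
    subst (appChain H args) n N = appChain (subst H n N) (args.map (fun A => subst A n N)) := by
  induction args generalizing H with
  | nil => rfl
  | cons a rest ih => simp only [appChain, List.map, ih, subst_app]

theorem appChain_stepsL {H H' : Lam} (h : Steps H H') (args : List Lam) :
    Steps (appChain H args) (appChain H' args) := by
  induction args generalizing H H' with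
  | nil => exact h
  | cons a rest ih => exact ih (Steps.appL a h)

/-- Head skeleton: `Skel k h j M` iff `M = λ^k. (var h) A₁ … Aⱼ`. -/
inductive Skel : ℕ → ℕ → ℕ → Lam → Prop
  | var (h : ℕ) : Skel 0 h 0 (var h)
  | app {h j : ℕ} {M : Lam} (N : Lam) : Skel 0 h j M → Skel 0 h (j + 1) (app M N)
  | lam {k h j : ℕ} {M : Lam} : Skel k h j M → Skel (k + 1) h j (lam M)

theorem skel_not_lam {h j : ℕ} {M X : Lam} (hs : Skel 0 h j M) : M ≠ lam X := by
  cases hs <;> simp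

theorem skel_step {k h j : ℕ} {M N : Lam} (hs : Skel k h j M) (hstep : Step M N) :
    Skel k h j N := by
  induction hs generalizing N with
  | var h => cases hstep
  | app A hs ih =>
    cases hstep with
    | beta B A' => exact absurd rfl (skel_not_lam hs)
    | appL _ h' => exact Skel.app _ (ih h')
    | appR _ h' => exact Skel.app _ hs
  | lam hs ih =>
    cases hstep with
    | lam h' => exact Skel.lam (ih h')

theorem skel_steps {k h j : ℕ} {M N : Lam} (hs : Skel k h j M) (hsteps : Steps M N) :
    Skel k h j N := by
  induction hsteps with
  | refl => exact hs
  | tail _ h2 ih => exact skel_step ih h2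

theorem skel_unique {k h j k' h' j' : ℕ} {M : Lam}
    (h1 : Skel k h j M) (h2 : Skel k' h' j' M) : k = k' ∧ h = h' ∧ j = j' := by
  induction h1 generalizing k' h' j' with
  | var h => cases h2; exact ⟨rfl, rfl, rfl⟩
  | app N hs ih =>
    cases h2 with
    | app N' hs' => obtain ⟨e1, e2, e3⟩ := ih hs'; exact ⟨rfl, e2, by omega⟩
  | lam hs ih =>
    cases h2 with
    | lam hs' => obtain ⟨e1, e2, e3⟩ := ih hs'; exact ⟨by omega, e2, e3⟩

theorem skel_T {k h j : ℕ} (hs : Skel k h j T) : k = 2 ∧ h = 1 ∧ j = 0 :=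
  skel_unique hs (Skel.lam (Skel.lam (Skel.var 1)))

theorem skel_F {k h j : ℕ} (hs : Skel k h j F) : k = 2 ∧ h = 0 ∧ j = 0 :=
  skel_unique hs (Skel.lam (Skel.lam (Skel.var 0)))

theorem skel_hasFree : ∀ {k h j : ℕ} {M : Lam}, Skel k h j M → k ≤ h → HasFree M (h - k) := by
  intro k h j M hs
  induction hs with
  | var h => intro _; show h = h - 0; omega
  | app N hs ih => intro hk; exact Or.inl (ih hk)
  | @lam k h j M hs ih =>
    intro hk
    simp only [hasFree_lam]
    have e : h - (k + 1) + 1 = h - k := by omega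
    rw [e]
    exact ih (by omega)

theorem skel_subst_lt {k h j : ℕ} {M : Lam} (hs : Skel k h j M) :
    ∀ {n : ℕ} (N : Lam), h < n + k → Skel k h j (subst M n N) := by
  induction hs with
  | var h => intro n N hlt; rw [subst_var_lt (by omega)]; exact Skel.var h
  | app A hs ih =>
    intro n N hlt
    exact Skel.app _ (ih N (by omega))
  | lam hs ih =>
    intro n N hlt
    simp only [subst_lam]
    exact Skel.lam (ih (lift 0 N) (by omega))

theorem skel_subst_head {k h j : ℕ} {M : Lam} (hs : Skel k h j M) :
    ∀ {n : ℕ} {W : Lam}, Closed W → h = n + k →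
    ∃ args : List Lam, args.length = j ∧ subst M n W = lams k (appChain W args) := by
  induction hs with
  | var h =>
    intro n W hW he
    refine ⟨[], rfl, ?_⟩
    rw [show h = n by omega, subst_var_eq]
    rfl
  | app A hs ih =>
    intro n W hW he
    obtain ⟨args, hlen, heq⟩ := ih hW he
    refine ⟨args ++ [subst A n W], by simp [hlen], ?_⟩
    simp only [subst_app, heq]
    rw [appChain_append]
    rfl
  | lam hs ih =>
    intro n W hW he
    obtain ⟨args, hlen, heq⟩ := ih (n := n + 1) (W := lift 0 W) (by rw [hW.lift_eq]; exact hW)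
      (by omega)
    refine ⟨args, hlen, ?_⟩
    simp only [subst_lam]
    rw [hW.lift_eq] at heq ⊢
    rw [heq]
    rfl

/-- Contracting a `λ`-block applied to fewer arguments than its length. -/
theorem block_contract : ∀ (args : List Lam) (p : ℕ) (B : Lam), args.length ≤ p →
    ∃ C, Steps (appChain (lams p B) args) (lams (p - args.length) C) := by
  intro args
  induction args with
  | nil => intro p B _; exact ⟨B, Steps.refl _⟩
  | cons a rest ih =>
    intro p B hlen
    simp only [List.length_cons] at hlen
    obtain ⟨p', rfl⟩ : ∃ p', p = p' + 1 := ⟨p - 1, by omega⟩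
    have step1 : Step (app (lams (p' + 1) B) a) (lams p' (subst B (0 + p') (liftIter p' a))) := by
      have : lams (p' + 1) B = lam (lams p' B) := rfl
      rw [this]
      have := Step.beta (lams p' B) a
      rwa [subst_lams] at this
    obtain ⟨C, hC⟩ := ih p' (subst B (0 + p') (liftIter p' a)) (by omega)
    refine ⟨C, ?_⟩
    have : appChain (lams (p' + 1) B) (a :: rest)
        = appChain (app (lams (p' + 1) B) a) rest := rfl
    rw [this]
    have h2 : Steps (appChain (app (lams (p' + 1) B) a) rest)
        (appChain (lams p' (subst B (0 + p') (liftIter p' a))) rest) :=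
      appChain_stepsL (Steps.single step1) rest
    have h3 : p' + 1 - (a :: rest).length = p' - rest.length := by simp
    rw [h3]
    exact h2.trans hC

/-- Reducts of an iterated abstraction. -/
theorem steps_lam_inv {M Y : Lam} (h : Steps (lam M) Y) :
    ∃ M', Y = lam M' ∧ Steps M M' := by
  induction h with
  | refl => exact ⟨M, rfl, Steps.refl M⟩
  | tail _ h2 ih =>
    obtain ⟨M', rfl, hM'⟩ := ih
    cases h2 with
    | lam h3 => exact ⟨_, rfl, hM'.tail h3⟩

theorem no_lam3_to_F {X : Lam} (h : Steps (lam (lam (lam X))) F) : False := by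
  obtain ⟨M1, hM1, h1⟩ := steps_lam_inv h
  have e1 : M1 = lam (var 0) := by
    have hF : (F : Lam) = lam (lam (var 0)) := rfl
    rw [hF] at hM1
    exact ((lam.injEq _ _).mp hM1.symm)
  rw [e1] at h1
  obtain ⟨M2, hM2, h2⟩ := steps_lam_inv h1
  have e2 : M2 = var 0 := (lam.injEq _ _).mp hM2.symm
  rw [e2] at h2
  obtain ⟨M3, hM3, _⟩ := steps_lam_inv h2
  exact absurd hM3 (by simp)


/-! ### The simulation relation -/

theorem lift_appChain (d : ℕ) (H : Lam) (args : List Lam) :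
    lift d (appChain H args) = appChain (lift d H) (args.map (lift d)) := by
  induction args generalizing H with
  | nil => rfl
  | cons a rest ih => simp only [appChain, List.map, ih, lift_app]

theorem skel_appChain (xs : List Lam) : ∀ {h j : ℕ} {H : Lam}, Skel 0 h j H →
    Skel 0 h (j + xs.length) (appChain H xs) := by
  induction xs with
  | nil => intro h j H hs; simpa [appChain] using hs
  | cons x rest ih =>
    intro h j H hs
    have := ih (Skel.app x hs)
    have e : j + (x :: rest).length = (j + 1) + rest.length := by simp; omega
    rw [e]
    exact this

/-- `Sim W c X T` : `T` is obtained from `X` by hereditarily instantiating the free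
variable `c` by the closed term `W` and reducing inside the `W`-generated regions. -/
inductive Sim (W : Lam) : ℕ → Lam → Lam → Prop
  | var {c i : ℕ} : i ≠ c → Sim W c (var i) (var i)
  | lam {c : ℕ} {X T : Lam} : Sim W (c + 1) X T → Sim W c (lam X) (lam T)
  | app {c : ℕ} {X₁ T₁ X₂ T₂ : Lam} : Sim W c X₁ T₁ → Sim W c X₂ T₂ →
      Sim W c (app X₁ X₂) (app T₁ T₂)
  | w {c : ℕ} {T : Lam} (ps : List (Lam × Lam)) :
      (∀ p ∈ ps, Sim W c p.1 p.2) →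
      Steps (appChain W (ps.map Prod.snd)) T →
      Sim W c (appChain (var c) (ps.map Prod.fst)) T

theorem simRefl (W : Lam) : ∀ (X : Lam) {c : ℕ}, ¬ HasFree X c → Sim W c X X := by
  intro X
  induction X with
  | var i =>
    intro c h
    exact Sim.var (by simpa using h)
  | app X₁ X₂ ih₁ ih₂ =>
    intro c h
    simp only [hasFree_app] at h
    exact Sim.app (ih₁ (fun hf => h (Or.inl hf))) (ih₂ (fun hf => h (Or.inr hf)))
  | lam X ih =>
    intro c h
    exact Sim.lam (ih (by simpa using h))

theorem simLift {W : Lam} (hW : Closed W) {c : ℕ} {X T : Lam} (h : Sim W c X T) :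
    ∀ (d : ℕ), Sim W (if d ≤ c then c + 1 else c) (lift d X) (lift d T) := by
  induction h with
  | @var c i hic =>
    intro d
    by_cases hid : i < d
    · rw [lift_var_lt hid]
      refine Sim.var ?_
      split_ifs with hdc <;> omega
    · rw [lift_var_ge hid]
      refine Sim.var ?_
      split_ifs with hdc <;> omega
  | @lam c X T _ ih =>
    intro d
    simp only [lift_lam]
    have := ih (d + 1)
    have e : (if d + 1 ≤ c + 1 then c + 1 + 1 else c + 1)
        = (if d ≤ c then c + 1 else c) + 1 := by split_ifs with h1 h2 h2 <;> omega
    rw [e] at this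
    exact Sim.lam this
  | app _ _ ih₁ ih₂ =>
    intro d
    exact Sim.app (ih₁ d) (ih₂ d)
  | @w c T ps hps hsteps ih =>
    intro d
    rw [lift_appChain]
    have hhead : lift d (var c) = var (if d ≤ c then c + 1 else c) := by
      split_ifs with hdc
      · exact lift_var_ge (by omega)
      · exact lift_var_lt (by omega)
    rw [hhead]
    have hT : Steps (lift d (appChain W (ps.map Prod.snd))) (lift d T) :=
      Steps.lift_compat hsteps d
    rw [lift_appChain, hW.lift_eq] at hT
    have := Sim.w (W := W) (c := if d ≤ c then c + 1 else c)
      (ps.map (fun p => (lift d p.1, lift d p.2)))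
      (by
        intro p hp
        simp only [List.mem_map] at hp
        obtain ⟨q, hq, rfl⟩ := hp
        exact ih q hq d)
      (by
        have e : (ps.map (fun p => (lift d p.1, lift d p.2))).map Prod.snd
            = (ps.map Prod.snd).map (lift d) := by
          simp [List.map_map]
        rw [e]
        exact hT)
    have e2 : (ps.map (fun p => (lift d p.1, lift d p.2))).map Prod.fst
        = (ps.map Prod.fst).map (lift d) := by
      simp [List.map_map]
    rwa [e2] at this

theorem simSubst {W : Lam} (hW : Closed W) {c₁ : ℕ} {X T : Lam} (h : Sim W c₁ X T) :
    ∀ {c n : ℕ}, c₁ = c + 1 → n ≤ c → ∀ {U V : Lam}, Sim W c U V →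
    Sim W c (subst X n U) (subst T n V) := by
  induction h with
  | @var c₁ i hic =>
    intro c n hc hn U V hUV
    subst hc
    by_cases h1 : i = n
    · subst h1; rw [subst_var_eq, subst_var_eq]; exact hUV
    · rcases Nat.lt_or_ge i n with h2 | h2
      · rw [subst_var_lt h2, subst_var_lt h2]; exact Sim.var (by omega)
      · rw [subst_var_gt (by omega), subst_var_gt (by omega)]; exact Sim.var (by omega)
  | @lam c₁ X T _ ih =>
    intro c n hc hn U V hUV
    subst hc
    simp only [subst_lam]
    refine Sim.lam ?_
    have hl := simLift hW hUV 0
    rw [if_pos (Nat.zero_le c)] at hl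
    exact ih rfl (by omega) hl
  | app _ _ ih₁ ih₂ =>
    intro c n hc hn U V hUV
    simp only [subst_app]
    exact Sim.app (ih₁ hc hn hUV) (ih₂ hc hn hUV)
  | @w c₁ T ps hps hsteps ih =>
    intro c n hc hn U V hUV
    subst hc
    rw [subst_appChain, subst_var_gt (by omega)]
    have e0 : c + 1 - 1 = c := by omega
    rw [e0]
    have hT : Steps (subst (appChain W (ps.map Prod.snd)) n V) (subst T n V) :=
      Steps.subst_left hsteps n V
    rw [subst_appChain, hW.subst_eq] at hT
    have := Sim.w (W := W) (c := c)
      (ps.map (fun p => (subst p.1 n U, subst p.2 n V)))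
      (by
        intro p hp
        simp only [List.mem_map] at hp
        obtain ⟨q, hq, rfl⟩ := hp
        exact ih q hq rfl (by omega) hUV)
      (by
        have e : (ps.map (fun p => (subst p.1 n U, subst p.2 n V))).map Prod.snd
            = (ps.map Prod.snd).map (fun A => subst A n V) := by
          simp [List.map_map]
        rw [e]
        exact hT)
    have e2 : (ps.map (fun p => (subst p.1 n U, subst p.2 n V))).map Prod.fst
        = (ps.map Prod.fst).map (fun A => subst A n U) := by
      simp [List.map_map]
    rwa [e2] at this

theorem simStep {W : Lam} (hW : Closed W) {c : ℕ} {X T T' : Lam}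
    (h : Sim W c X T) (hstep : Step T T') :
    ∃ X', Steps X X' ∧ Sim W c X' T' := by
  induction h generalizing T' with
  | var hic => cases hstep
  | @lam c X T hXT ih =>
    cases hstep with
    | lam h' =>
      obtain ⟨X', hX', hsim⟩ := ih h'
      exact ⟨lam X', Steps.lam hX', Sim.lam hsim⟩
  | @app c X₁ T₁ X₂ T₂ h₁ h₂ ih₁ ih₂ =>
    cases hstep with
    | appL N h' =>
      obtain ⟨X₁', hX₁', hsim⟩ := ih₁ h'
      exact ⟨app X₁' X₂, Steps.appL _ hX₁', Sim.app hsim h₂⟩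
    | appR M h' =>
      obtain ⟨X₂', hX₂', hsim⟩ := ih₂ h'
      exact ⟨app X₁ X₂', Steps.appR _ hX₂', Sim.app h₁ hsim⟩
    | beta B A =>
      -- T₁ = lam B, T' = subst B 0 T₂
      cases h₁ with
      | lam h₀ =>
        rename_i X₀
        refine ⟨subst X₀ 0 X₂, Steps.single (Step.beta X₀ X₂), ?_⟩
        exact simSubst hW h₀ rfl (Nat.zero_le c) h₂
      | w ps hps hsteps =>
        refine ⟨_, Steps.refl _, ?_⟩
        have hnew : Steps (appChain W ((ps ++ [(X₂, T₂)]).map Prod.snd)) (subst B 0 T₂) := by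
          have e : (ps ++ [(X₂, T₂)]).map Prod.snd = (ps.map Prod.snd) ++ [T₂] := by simp
          rw [e, appChain_append]
          exact ((Steps.appL _ hsteps).tail (Step.beta B T₂))
        have := Sim.w (W := W) (c := c) (ps ++ [(X₂, T₂)])
          (by
            intro p hp
            rcases List.mem_append.mp hp with hp | hp
            · exact hps p hp
            · simp at hp; subst hp; exact h₂)
          hnew
        have e2 : (ps ++ [(X₂, T₂)]).map Prod.fst = (ps.map Prod.fst) ++ [X₂] := by simp
        rw [e2, appChain_append] at this
        exact this
  | @w c T ps hps hsteps ih =>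
    exact ⟨_, Steps.refl _, Sim.w ps hps (hsteps.tail hstep)⟩

theorem simSteps {W : Lam} (hW : Closed W) {c : ℕ} {X T T' : Lam}
    (h : Sim W c X T) (hsteps : Steps T T') :
    ∃ X', Steps X X' ∧ Sim W c X' T' := by
  induction hsteps with
  | refl => exact ⟨X, Steps.refl _, h⟩
  | tail _ h2 ih =>
    obtain ⟨X', hX', hsim⟩ := ih
    obtain ⟨X'', hX'', hsim'⟩ := simStep hW hsim h2
    exact ⟨X'', hX'.trans hX'', hsim'⟩

theorem simSkelZero {W : Lam} {c : ℕ} {X T : Lam} (h : Sim W c X T) :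
    ∀ {hh j : ℕ}, Skel 0 hh j T → ∃ h' j', Skel 0 h' j' X := by
  induction h with
  | @var c i hic => intro hh j _; exact ⟨i, 0, Skel.var i⟩
  | lam _ _ => intro hh j hs; cases hs
  | @app c X₁ T₁ X₂ T₂ h₁ h₂ ih₁ ih₂ =>
    intro hh j hs
    cases hs with
    | app N hs' =>
      obtain ⟨h', j', hX₁⟩ := ih₁ hs'
      exact ⟨h', j' + 1, Skel.app _ hX₁⟩
  | @w c T ps hps hsteps ih =>
    intro hh j _
    exact ⟨c, (ps.map Prod.fst).length, by simpa using skel_appChain (ps.map Prod.fst) (Skel.var c)⟩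

theorem simSkel {W : Lam} {c : ℕ} {X T : Lam} (h : Sim W c X T) :
    ∀ {k hh j : ℕ}, Skel k hh j T → ∃ k' h' j', Skel k' h' j' X := by
  induction h with
  | @var c i hic => intro k hh j _; exact ⟨0, i, 0, Skel.var i⟩
  | @lam c X T hXT ih =>
    intro k hh j hs
    cases hs with
    | lam hs' =>
      obtain ⟨k', h', j', hX⟩ := ih hs'
      exact ⟨k' + 1, h', j', Skel.lam hX⟩
  | @app c X₁ T₁ X₂ T₂ h₁ h₂ ih₁ ih₂ =>
    intro k hh j hs
    cases hs with
    | app N hs' =>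
      obtain ⟨h', j', hX⟩ := simSkelZero h₁ hs'
      exact ⟨0, h', j' + 1, Skel.app _ hX⟩
  | @w c T ps hps hsteps ih =>
    intro k hh j _
    exact ⟨0, c, (ps.map Prod.fst).length,
      by simpa using skel_appChain (ps.map Prod.fst) (Skel.var c)⟩


/-! ### The numeral system -/

/-- `chainD H n k = H (var (n-1)) (var (n-2)) … (var (n-k))`. -/
def chainD (H : Lam) (n : ℕ) : ℕ → Lam
  | 0 => H
  | k + 1 => app (chainD H n k) (var (n - (k + 1)))

/-- The width numeral `Wn n = λ y₁ … y_{n+1}. y₁ y₂ … y_{n+1} I`. -/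
def Wn (n : ℕ) : Lam := lams (n + 1) (app (chainD (var n) n n) I)

/-- Tag: `T` for zero, `F` for successors. -/
def Tag : ℕ → Lam
  | 0 => T
  | _ + 1 => F

/-- The numerals. -/
def num (n : ℕ) : Lam := pair (Tag n) (Wn n)

/-- Successor: `λd.λz. z F (λa.λb. d F (a b))`. -/
def Sterm : Lam :=
  lam (lam (app (app (var 0) F) (lam (lam (app (app (var 3) F) (app (var 1) (var 0)))))))

/-- Zero test: `λd. d T`. -/
def Zterm : Lam := lam (app (var 0) T)

/-! #### Closedness -/

theorem closed_I : Closed I := by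
  intro n h
  simp only [I, hasFree_lam, hasFree_var] at h
  omega

theorem closed_T : Closed T := by
  intro n h
  simp only [T, hasFree_lam, hasFree_var] at h
  omega

theorem closed_F : Closed F := by
  intro n h
  simp only [F, hasFree_lam, hasFree_var] at h
  omega

theorem closed_Tag (n : ℕ) : Closed (Tag n) := by
  cases n with
  | zero => exact closed_T
  | succ n => exact closed_F

theorem hasFree_chainD {H : Lam} {n : ℕ} (hH : ∀ i, HasFree H i → i ≤ n) :
    ∀ (k : ℕ) (i : ℕ), HasFree (chainD H n k) i → i ≤ n := by
  intro k
  induction k with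
  | zero => exact hH
  | succ k ih =>
    intro i h
    rcases h with h | h
    · exact ih i h
    · simp only [hasFree_var] at h
      omega

theorem hasFree_lams {k : ℕ} {X : Lam} {i : ℕ} :
    HasFree (lams k X) i ↔ HasFree X (i + k) := by
  induction k generalizing i with
  | zero => rfl
  | succ k ih =>
    simp only [lams, hasFree_lam, ih]
    constructor
    · intro h; rwa [show i + 1 + k = i + (k + 1) by omega] at h
    · intro h; rwa [show i + (k + 1) = i + 1 + k by omega] at h

theorem closed_Wn (n : ℕ) : Closed (Wn n) := by
  intro i h
  rw [Wn, hasFree_lams] at h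
  rcases h with h | h
  · have hle := hasFree_chainD (H := var n) (n := n)
      (by intro i h; simp only [hasFree_var] at h; omega) n (i + (n + 1)) h
    omega
  · exact closed_I _ h

theorem closed_pair {A B : Lam} (hA : Closed A) (hB : Closed B) : Closed (pair A B) := by
  intro i h
  simp only [pair, hasFree_lam, hasFree_app, hasFree_var] at h
  rw [hA.lift_eq, hB.lift_eq] at h
  rcases h with (h | h) | h
  · omega
  · exact hA _ h
  · exact hB _ h

theorem closed_num (n : ℕ) : Closed (num n) := closed_pair (closed_Tag n) (closed_Wn n)

theorem closed_Sterm : Closed Sterm := by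
  intro i h
  simp only [Sterm, hasFree_lam, hasFree_app, hasFree_var] at h
  rcases h with ((h | h) | ((h | h) | (h | h))) <;> first | omega | exact closed_F _ h

theorem closed_Zterm : Closed Zterm := by
  intro i h
  simp only [Zterm, hasFree_lam, hasFree_app, hasFree_var] at h
  rcases h with h | h
  · omega
  · exact closed_T _ h

/-! #### Normal forms -/

theorem T_nf : ∀ X, ¬ Step T X := by
  intro X h
  cases h with
  | lam h1 => cases h1 with
    | lam h2 => cases h2

theorem F_nf : ∀ X, ¬ Step F X := by
  intro X h
  cases h with
  | lam h1 => cases h1 with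
    | lam h2 => cases h2

theorem Tag_nf (n : ℕ) : ∀ X, ¬ Step (Tag n) X := by
  cases n with
  | zero => exact T_nf
  | succ n => exact F_nf

/-! #### Pair projections -/

theorem pair_beta {A B C : Lam} (hA : Closed A) (hB : Closed B) :
    Step (app (pair A B) C) (app (app C A) B) := by
  rw [pair]
  have e : subst (app (app (var 0) (lift 0 A)) (lift 0 B)) 0 C = app (app C A) B := by
    simp only [subst_app, subst_var_eq]
    rw [substLift, substLift]
  rw [← e]
  exact Step.beta _ _

theorem T_beta (A : Lam) (hA : Closed A) : Step (app T A) (lam A) := by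
  have e : subst (lam (var 1)) 0 A = lam A := by
    simp only [subst_lam]
    rw [subst_var_eq, hA.lift_eq]
  rw [show (T : Lam) = lam (lam (var 1)) from rfl, ← e]
  exact Step.beta _ _

theorem F_beta (A : Lam) : Step (app F A) I := by
  have e : subst (lam (var 0)) 0 A = I := by
    simp only [subst_lam]
    rw [subst_var_lt (by omega)]
    rfl
  rw [show (F : Lam) = lam (lam (var 0)) from rfl, ← e]
  exact Step.beta _ _

theorem I_beta (B : Lam) : Step (app I B) B := by
  have e : subst (var 0) 0 B = B := subst_var_eq B
  rw [show (I : Lam) = lam (var 0) from rfl, ← e]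
  exact Step.beta _ _

theorem K_beta {A : Lam} (hA : Closed A) (B : Lam) : Step (app (lam A) B) A := by
  have hb := Step.beta A B
  rwa [hA.subst_eq 0 B] at hb

theorem pair_fst {A B : Lam} (hA : Closed A) (hB : Closed B) :
    Steps (app (pair A B) T) A := by
  have s1 := pair_beta (C := T) hA hB
  have s2 := T_beta A hA
  have s3 := K_beta hA B
  exact ((Steps.single s1).tail (Step.appL B s2)).tail s3

theorem pair_snd {A B : Lam} (hA : Closed A) (hB : Closed B) :
    Steps (app (pair A B) F) B := by
  have s1 := pair_beta (C := F) hA hB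
  have s2 := F_beta A
  have s3 := I_beta B
  exact ((Steps.single s1).tail (Step.appL B s2)).tail s3

theorem num_proj_T (n : ℕ) : Steps (app (num n) T) (Tag n) :=
  pair_fst (closed_Tag n) (closed_Wn n)

theorem num_proj_F (n : ℕ) : Steps (app (num n) F) (Wn n) :=
  pair_snd (closed_Tag n) (closed_Wn n)

/-! #### The zero-test equations -/

theorem Zterm_eq (n : ℕ) : BetaEq (app Zterm (num n)) (Tag n) := by
  have s1 : Step (app Zterm (num n)) (app (num n) T) := by
    rw [Zterm]
    have e : subst (app (var 0) T) 0 (num n) = app (num n) T := by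
      simp only [subst_app, subst_var_eq]
      rw [closed_T.subst_eq 0 (num n)]
    rw [← e]
    exact Step.beta _ _
  exact ((Steps.single s1).trans (num_proj_T n)).betaEq

/-! #### The successor equations -/

theorem liftIter_var_zero_one (n : ℕ) :
    liftIter n (app (var 1) (var 0)) = app (var (n + 1)) (var n) := by
  induction n with
  | zero => rfl
  | succ n ih =>
    simp only [liftIter, ih, lift_app]
    rw [lift_var_ge (by omega), lift_var_ge (by omega)]

theorem subst_chainD (n : ℕ) (V : Lam) : ∀ (k : ℕ), k ≤ n →
    subst (chainD (var n) n k) n V = chainD V n k := by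
  intro k
  induction k with
  | zero =>
    intro _
    exact subst_var_eq V
  | succ k ih =>
    intro hk
    simp only [chainD, subst_app, ih (by omega)]
    rw [subst_var_lt (show n - (k+1) < n by omega)]

theorem chainD_shift (n : ℕ) : ∀ (k : ℕ), k ≤ n →
    chainD (var (n + 1)) (n + 1) (k + 1) = chainD (app (var (n + 1)) (var n)) n k := by
  intro k
  induction k with
  | zero =>
    intro _
    simp only [chainD]
    rw [show n + 1 - 1 = n by omega]
  | succ k ih =>
    intro hk
    show app (chainD (var (n+1)) (n+1) (k+1)) (var (n + 1 - (k + 2)))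
        = app (chainD (app (var (n+1)) (var n)) n k) (var (n - (k+1)))
    rw [ih (by omega), show n + 1 - (k + 2) = n - (k + 1) by omega]

theorem Wn_step (n : ℕ) :
    Step (app (Wn n) (app (var 1) (var 0)))
      (lams n (app (chainD (var (n + 1)) (n + 1) (n + 1)) I)) := by
  have hb := Step.beta (lams n (app (chainD (var n) n n) I)) (app (var 1) (var 0))
  have e : subst (lams n (app (chainD (var n) n n) I)) 0 (app (var 1) (var 0))
      = lams n (app (chainD (var (n + 1)) (n + 1) (n + 1)) I) := by
    rw [subst_lams]
    congr 1
    simp only [subst_app]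
    rw [closed_I.subst_eq, liftIter_var_zero_one]
    congr 1
    rw [show (0 + n) = n by omega, subst_chainD n _ n (Nat.le_refl n)]
    exact (chainD_shift n n (Nat.le_refl n)).symm
  rw [e] at hb
  rw [Wn, show lams (n + 1) (app (chainD (var n) n n) I)
      = lam (lams n (app (chainD (var n) n n) I)) from rfl]
  rw [← e]
  exact Step.beta _ _

theorem lams_two (n : ℕ) (X : Lam) : lams (n + 2) X = lam (lam (lams n X)) := rfl

theorem Sterm_eq (n : ℕ) : BetaEq (app Sterm (num n)) (num (n + 1)) := by
  have s1 : Step (app Sterm (num n))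
      (lam (app (app (var 0) F)
        (lam (lam (app (app (num n) F) (app (var 1) (var 0))))))) := by
    have hb := Step.beta
      (lam (app (app (var 0) F)
        (lam (lam (app (app (var 3) F) (app (var 1) (var 0))))))) (num n)
    have e : subst
        (lam (app (app (var 0) F)
          (lam (lam (app (app (var 3) F) (app (var 1) (var 0))))))) 0 (num n)
        = lam (app (app (var 0) F)
            (lam (lam (app (app (num n) F) (app (var 1) (var 0)))))) := by
      simp only [subst_lam, subst_app, (closed_num n).lift_eq]
      simp [subst_var, closed_F.subst_eq]
    rw [Sterm, ← e]
    exact Step.beta _ _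
  have s2 : Steps
      (lam (app (app (var 0) F)
        (lam (lam (app (app (num n) F) (app (var 1) (var 0)))))))
      (lam (app (app (var 0) F)
        (lam (lam (app (Wn n) (app (var 1) (var 0))))))) :=
    Steps.lam (Steps.appR _ (Steps.lam (Steps.lam (Steps.appL _ (num_proj_F n)))))
  have s3 : Step
      (lam (app (app (var 0) F)
        (lam (lam (app (Wn n) (app (var 1) (var 0)))))))
      (lam (app (app (var 0) F)
        (lam (lam (lams n (app (chainD (var (n + 1)) (n + 1) (n + 1)) I)))))) :=
    Step.lam (Step.appR _ (Step.lam (Step.lam (Wn_step n))))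
  have efin : num (n + 1)
      = lam (app (app (var 0) F)
          (lam (lam (lams n (app (chainD (var (n + 1)) (n + 1) (n + 1)) I))))) := by
    show pair (Tag (n + 1)) (Wn (n + 1)) = _
    rw [show Tag (n + 1) = F from rfl]
    rw [pair, closed_F.lift_eq, (closed_Wn (n + 1)).lift_eq]
    rw [show Wn (n + 1) = lams (n + 2) (app (chainD (var (n + 1)) (n + 1) (n + 1)) I) from rfl]
    rw [lams_two]
  rw [efin]
  exact (((Steps.single s1).trans s2).tail s3).betaEq


/-! #### βη-normality -/

theorem ben_var (n : ℕ) : IsBetaEtaNormal (var n) := by simp [IsBetaEtaNormal]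

theorem ben_app_var {m : ℕ} {N : Lam} :
    IsBetaEtaNormal (app (var m) N) ↔ IsBetaEtaNormal (var m) ∧ IsBetaEtaNormal N := by
  simp [IsBetaEtaNormal]

theorem ben_app_app {A B N : Lam} :
    IsBetaEtaNormal (app (app A B) N) ↔ IsBetaEtaNormal (app A B) ∧ IsBetaEtaNormal N := by
  simp [IsBetaEtaNormal]

theorem ben_lam_lam {M : Lam} :
    IsBetaEtaNormal (lam (lam M)) ↔ IsBetaEtaNormal (lam M) := by
  simp [IsBetaEtaNormal]

theorem ben_lam_var (m : ℕ) : IsBetaEtaNormal (lam (var m)) := by simp [IsBetaEtaNormal]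

theorem ben_lam_app_lam {M K : Lam} :
    IsBetaEtaNormal (lam (app M (lam K))) ↔ IsBetaEtaNormal (app M (lam K)) := by
  simp [IsBetaEtaNormal]

theorem ben_I : IsBetaEtaNormal I := ben_lam_var 0

theorem ben_T : IsBetaEtaNormal T := by
  rw [show (T : Lam) = lam (lam (var 1)) from rfl, ben_lam_lam]
  exact ben_lam_var 1

theorem ben_F : IsBetaEtaNormal F := by
  rw [show (F : Lam) = lam (lam (var 0)) from rfl, ben_lam_lam]
  exact ben_lam_var 0

theorem ben_Tag (n : ℕ) : IsBetaEtaNormal (Tag n) := by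
  cases n with
  | zero => exact ben_T
  | succ n => exact ben_F

theorem ben_chainD (n : ℕ) : ∀ k, IsBetaEtaNormal (chainD (var n) n k) := by
  intro k
  induction k with
  | zero => exact ben_var n
  | succ k ih =>
    show IsBetaEtaNormal (app (chainD (var n) n k) (var (n - (k + 1))))
    cases k with
    | zero => exact ben_app_var.mpr ⟨ben_var n, ben_var _⟩
    | succ k' =>
      rw [show chainD (var n) n (k' + 1)
          = app (chainD (var n) n k') (var (n - (k' + 1))) from rfl] at ih ⊢
      exact ben_app_app.mpr ⟨ih, ben_var _⟩

theorem ben_lams_of {X : Lam} (hX : IsBetaEtaNormal (lam X)) :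
    ∀ k, IsBetaEtaNormal (lams (k + 1) X) := by
  intro k
  induction k with
  | zero => exact hX
  | succ k ih =>
    show IsBetaEtaNormal (lam (lams (k + 1) X))
    have : lams (k + 1) X = lam (lams k X) := rfl
    rw [this] at ih ⊢
    exact ben_lam_lam.mpr ih

theorem ben_Wn (n : ℕ) : IsBetaEtaNormal (Wn n) := by
  refine ben_lams_of ?_ n
  rw [show (I : Lam) = lam (var 0) from rfl, ben_lam_app_lam]
  cases n with
  | zero => exact ben_app_var.mpr ⟨ben_var 0, ben_lam_var 0⟩
  | succ n' =>
    rw [show chainD (var (n' + 1)) (n' + 1) (n' + 1)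
        = app (chainD (var (n' + 1)) (n' + 1) n') (var ((n' + 1) - (n' + 1))) from rfl]
    refine ben_app_app.mpr ⟨?_, ben_lam_var 0⟩
    rw [show app (chainD (var (n' + 1)) (n' + 1) n') (var ((n' + 1) - (n' + 1)))
        = chainD (var (n' + 1)) (n' + 1) (n' + 1) from rfl]
    exact ben_chainD (n' + 1) (n' + 1)

theorem ben_num (n : ℕ) : IsBetaEtaNormal (num n) := by
  rw [num, pair, (closed_Tag n).lift_eq, (closed_Wn n).lift_eq]
  rw [show Wn n = lam (lams n (app (chainD (var n) n n) I)) from rfl]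
  rw [ben_lam_app_lam]
  rw [show lam (lams n (app (chainD (var n) n n) I)) = Wn n from rfl]
  exact ben_app_app.mpr ⟨ben_app_var.mpr ⟨ben_var 0, ben_Tag n⟩, ben_Wn n⟩

/-! #### Injectivity -/

theorem lams_inj {X Y : Lam} (hX : ∀ Z, X ≠ lam Z) (hY : ∀ Z, Y ≠ lam Z) :
    ∀ {a b : ℕ}, lams a X = lams b Y → a = b := by
  intro a
  induction a with
  | zero =>
    intro b hab
    cases b with
    | zero => rfl
    | succ b => exact absurd hab (hX _)
  | succ a ih =>
    intro b hab
    cases b with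
    | zero => exact absurd hab.symm (hY _)
    | succ b =>
      have : lams a X = lams b Y := by
        have := (lam.injEq _ _).mp hab
        exact this
      rw [ih this]

theorem num_inj : Function.Injective num := by
  intro n m hnm
  rw [num, num, pair, pair] at hnm
  have h2 := (lam.injEq _ _).mp hnm
  have h3 := (app.injEq _ _ _ _).mp h2
  have h4 : lift 0 (Wn n) = lift 0 (Wn m) := h3.2
  rw [(closed_Wn n).lift_eq, (closed_Wn m).lift_eq] at h4
  rw [Wn, Wn] at h4
  have h5 := lams_inj (X := app (chainD (var n) n n) I) (Y := app (chainD (var m) m m) I)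
    (by intro Z h; cases h) (by intro Z h; cases h) h4
  omega

/-! ### The impossibility of a predecessor -/

theorem Steps.lams_congr {X Y : Lam} (h : Steps X Y) (k : ℕ) :
    Steps (lams k X) (lams k Y) := by
  induction k with
  | zero => exact h
  | succ k ih => exact Steps.lam ih

theorem sim_var_w {W : Lam} {c : ℕ} : Sim W c (var c) W := by
  have h := Sim.w (W := W) (c := c) [] (by intro p hp; cases hp) (Steps.refl W)
  simpa [appChain] using h

theorem main_no_Q (Q : Lam) (hQ : Closed Q)
    (hT : BetaEq (app Q (Wn 1)) T)
    (hF : ∀ m, 2 ≤ m → BetaEq (app Q (Wn m)) F) : False := by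
  have hW2 : Closed (Wn 2) := closed_Wn 2
  have hsim0 : Sim (Wn 2) 0 (app Q (var 0)) (app Q (Wn 2)) :=
    Sim.app (simRefl _ Q (hQ 0)) sim_var_w
  have hredF : Steps (app Q (Wn 2)) F := (hF 2 (by omega)).steps_of_nf F_nf
  obtain ⟨H, hMH, hsimH⟩ := simSteps hW2 hsim0 hredF
  obtain ⟨k, h, j, hskel⟩ := simSkel hsimH (Skel.lam (Skel.lam (Skel.var 0)))
  have hHfree : ∀ i, HasFree H i → i = 0 := by
    intro i hi
    have hMi : HasFree (app Q (var 0)) i := hMH.hasFree_rev hi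
    rcases hMi with h' | h'
    · exact absurd h' (hQ i)
    · simp only [hasFree_var] at h'
      omega
  have hhk : h ≤ k := by
    by_contra hlt
    have h1 := skel_hasFree hskel (by omega)
    have h2 := hHfree _ h1
    omega
  have instSteps : ∀ (m : ℕ), Steps (app Q (Wn m)) (subst H 0 (Wn m)) := by
    intro m
    have h1 := hMH.subst_left 0 (Wn m)
    have e : subst (app Q (var 0)) 0 (Wn m) = app Q (Wn m) := by
      simp only [subst_app, subst_var_eq, hQ.subst_eq]
    rwa [e] at h1
  rcases Nat.lt_or_ge h k with hcase | hcase
  · -- the head of the hnf is a bound variable: rigid behaviour, contradicting T ≠ F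
    have inst : ∀ (m : ℕ) (V : Lam), BetaEq (app Q (Wn m)) V → (∀ X, ¬ Step V X) →
        Skel k h j V := by
      intro m V hbeta hnf
      have h2 : Skel k h j (subst H 0 (Wn m)) := skel_subst_lt hskel (n := 0) (Wn m) (by omega)
      have h3 : BetaEq (subst H 0 (Wn m)) V :=
        ((instSteps m).betaEq.symm).trans hbeta
      exact skel_steps h2 (h3.steps_of_nf hnf)
    obtain ⟨_, e2, _⟩ := skel_T (inst 1 T hT T_nf)
    obtain ⟨_, e2', _⟩ := skel_F (inst 2 F (hF 2 (by omega)) F_nf)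
    omega
  · -- the head is the argument: applying to a wide numeral produces ≥ 3 leading λ's
    have hk : h = k := by omega
    obtain ⟨args, hlen, heq⟩ := skel_subst_head hskel (n := 0) (closed_Wn (j + 2)) (by omega)
    obtain ⟨C, hC⟩ := block_contract args (j + 3)
      (app (chainD (var (j + 2)) (j + 2) (j + 2)) I) (by omega)
    have hC' : Steps (appChain (Wn (j + 2)) args) (lams 3 C) := by
      rw [show j + 3 - args.length = 3 by omega] at hC
      rw [Wn, show (j + 2) + 1 = j + 3 from rfl]
      exact hC
    have hfull : Steps (app Q (Wn (j + 2))) (lams k (lams 3 C)) := by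
      refine (instSteps (j + 2)).trans ?_
      rw [heq]
      exact hC'.lams_congr k
    have e3 : lams k (lams 3 C) = lam (lam (lam (lams k C))) := by
      rw [← lams_add 3 k C, Nat.add_comm 3 k]
      rfl
    have hbeta : BetaEq (lam (lam (lam (lams k C)))) F := by
      rw [← e3]
      exact (hfull.betaEq.symm).trans (hF (j + 2) (by omega))
    exact no_lam3_to_F (hbeta.steps_of_nf F_nf)


/-! ### From a predecessor to a zero test on the width numerals -/

/-- `Qt P = λw. P ⟨F, w⟩ T`. -/
def Qt (P : Lam) : Lam :=
  lam (app (app (lift 0 P) (lam (app (app (var 0) F) (var 1)))) T)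

theorem closed_Qt {P : Lam} (hP : Closed P) : Closed (Qt P) := by
  intro i h
  simp only [Qt, hasFree_lam, hasFree_app, hasFree_var, hP.lift_eq] at h
  rcases h with (h | ((h | h) | h)) | h
  · exact hP _ h
  · omega
  · exact closed_F _ h
  · omega
  · exact closed_T _ h

theorem Qt_eq {P : Lam} (hP : Closed P)
    (hPeq : ∀ n, BetaEq (app P (num (n + 1))) (num n)) :
    ∀ k, BetaEq (app (Qt P) (Wn (k + 1))) (Tag k) := by
  intro k
  have s1 : Step (app (Qt P) (Wn (k + 1)))
      (app (app P (num (k + 1))) T) := by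
    rw [Qt, hP.lift_eq]
    have e : subst (app (app P (lam (app (app (var 0) F) (var 1)))) T) 0 (Wn (k + 1))
        = app (app P (num (k + 1))) T := by
      simp only [subst_app, subst_lam]
      rw [hP.subst_eq, closed_T.subst_eq, closed_F.subst_eq]
      rw [show subst (var 0) 1 (lift 0 (Wn (k + 1))) = var 0 from subst_var_lt (by omega) _]
      rw [subst_var_eq, (closed_Wn (k + 1)).lift_eq]
      have enum : num (k + 1) = lam (app (app (var 0) F) (Wn (k + 1))) := by
        rw [num, show Tag (k + 1) = F from rfl, pair, closed_F.lift_eq,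
          (closed_Wn (k + 1)).lift_eq]
      rw [enum]
    rw [← e]
    exact Step.beta _ _
  have h2 : BetaEq (app (app P (num (k + 1))) T) (app (num k) T) :=
    BetaEq.appL T (hPeq k)
  exact ((s1.betaEq.trans h2).trans (num_proj_T k).betaEq)

/-! ### The main theorem -/

theorem no_predecessor :
    ¬ ∃ P, Closed P ∧ ∀ n, BetaEq (app P (num (n + 1))) (num n) := by
  rintro ⟨P, hP, hPeq⟩
  have hQ := Qt_eq hP hPeq
  refine main_no_Q (Qt P) (closed_Qt hP) ?_ ?_
  · exact hQ 0
  · intro m hm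
    obtain ⟨m', rfl⟩ : ∃ m', m = m' + 2 := ⟨m - 2, by omega⟩
    have := hQ (m' + 1)
    exact this

end Lam

/-- There exists a numeral system (an infinite sequence of pairwise distinct closed
βη-normal λ-terms) which possesses a closed λ-term for Successor and a closed λ-term
for Zero Test, but no closed λ-term for Predecessor. -/
theorem statement3 :
    ∃ d : ℕ → Lam,
      (∀ n, Lam.Closed (d n)) ∧ (∀ n, Lam.IsBetaEtaNormal (d n)) ∧
      Function.Injective d ∧
      (∃ S, Lam.Closed S ∧ ∀ n, Lam.BetaEq (Lam.app S (d n)) (d (n + 1))) ∧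
      (∃ Z, Lam.Closed Z ∧ Lam.BetaEq (Lam.app Z (d 0)) Lam.T ∧
          ∀ n, Lam.BetaEq (Lam.app Z (d (n + 1))) Lam.F) ∧
      ¬ ∃ P, Lam.Closed P ∧ ∀ n, Lam.BetaEq (Lam.app P (d (n + 1))) (d n) := by
  refine ⟨Lam.num, Lam.closed_num, Lam.ben_num, Lam.num_inj,
    ⟨Lam.Sterm, Lam.closed_Sterm, Lam.Sterm_eq⟩,
    ⟨Lam.Zterm, Lam.closed_Zterm, Lam.Zterm_eq 0, fun n => Lam.Zterm_eq (n + 1)⟩,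
    Lam.no_predecessor⟩
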